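/- The complete bipartite graph K_{2,3} (with parts of sizes 2 and 3) is not an underlying push clique. -/

import Mathlib

/-- A directed graph `A` on `V` is an oriented graph: irreflexive and asymmetric. -/
def IsOriented {V : Type*} (A : V → V → Prop) : Prop :=
  (∀ v, ¬ A v v) ∧ ∀ u v, A u v → ¬ A v u

/-- `u` and `v` are adjacent in `A`. -/
def Adj {V : Type*} (A : V → V → Prop) (u v : V) : Prop :=
  A u v ∨ A v u

/-- The push of `A` by the vertex set `S`: arcs with exactly one endpoint in `S`
are reversed. -/
def push {V : Type*} (S : Set V) (A : V → V → Prop) (u v : V) : Prop :=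
  (Xor' (u ∈ S) (v ∈ S) ∧ A v u) ∨ (¬ Xor' (u ∈ S) (v ∈ S) ∧ A u v)

/-- `u` and `v` agree on `w`. -/
def AgreeOn {V : Type*} (A : V → V → Prop) (u v w : V) : Prop :=
  (A w u ∧ A w v) ∨ (A u w ∧ A v w)

/-- `u` and `v` disagree on `w`. -/
def DisagreeOn {V : Type*} (A : V → V → Prop) (u v w : V) : Prop :=
  (A u w ∧ A w v) ∨ (A w u ∧ A v w)

/-- `u` and `v` are joined by a directed 2-path in `A`. -/
def TwoPath {V : Type*} (A : V → V → Prop) (u v : V) : Prop :=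
  ∃ w, (A u w ∧ A w v) ∨ (A v w ∧ A w u)

/-- `A` is an oriented clique: any two distinct vertices are adjacent or joined
by a directed 2-path. -/
def IsOrientedClique {V : Type*} (A : V → V → Prop) : Prop :=
  ∀ u v, u ≠ v → Adj A u v ∨ TwoPath A u v

/-- `A` is a push clique: every push of `A` is an oriented clique. -/
def IsPushClique {V : Type*} (A : V → V → Prop) : Prop :=
  ∀ S : Set V, IsOrientedClique (push S A)

/-- `A` is an orientation of the simple graph `G`. -/
def IsOrientationOf {V : Type*} (A : V → V → Prop) (G : SimpleGraph V) : Prop :=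
  IsOriented A ∧ ∀ u v, Adj A u v ↔ G.Adj u v

/-- `G` is an underlying push clique. -/
def IsUnderlyingPushClique {V : Type*} (G : SimpleGraph V) : Prop :=
  ∃ A : V → V → Prop, IsOrientationOf A G ∧ IsPushClique A

/-- `G` is an underlying oriented clique. -/
def IsUnderlyingOrientedClique {V : Type*} (G : SimpleGraph V) : Prop :=
  ∃ A : V → V → Prop, IsOrientationOf A G ∧ IsOrientedClique A

lemma key {V : Type*} (A : V → V → Prop) (h : IsPushClique A) (u v : V)
    (hne : u ≠ v) (huu : ¬ A u u) (hvv : ¬ A v v) (hna : ¬ A u v) (hna' : ¬ A v u) :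
    (∃ w, (A u w ∧ A w v) ∨ (A v w ∧ A w u)) ∧
      (∃ w, (A w u ∧ A w v) ∨ (A u w ∧ A v w)) := by
  constructor
  · rcases h ∅ u v hne with hadj | ⟨w, hw⟩
    · simp only [Adj, push, Set.mem_empty_iff_false, Xor'] at hadj
      tauto
    · simp only [push, Set.mem_empty_iff_false, Xor'] at hw
      exact ⟨w, by tauto⟩
  · rcases h {u} u v hne with hadj | ⟨w, hw⟩
    · simp only [Adj, push, Set.mem_singleton_iff, Xor'] at hadj
      have : ¬ (v = u) := fun h' => hne h'.symm
      tauto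
    · by_cases hwu : w = u
      · subst hwu
        simp only [push, Set.mem_singleton_iff, Xor'] at hw
        tauto
      · by_cases hwv : w = v
        · subst hwv
          simp only [push, Set.mem_singleton_iff, Xor'] at hw
          have : ¬ (w = u) := hwu
          tauto
        · simp only [push, Set.mem_singleton_iff, Xor', hwu, hwv] at hw
          have h1 : ¬ (v = u) := fun h' => hne h'.symm
          simp only [Xor] at hw
          exact ⟨w, by tauto⟩

theorem stmt_11 :
    ¬ IsUnderlyingPushClique (completeBipartiteGraph (Fin 2) (Fin 3)) := by
  rintro ⟨A, ⟨⟨hirr, hasym⟩, hadj⟩, hpc⟩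
  have hbb : ∀ j k : Fin 3, ¬ A (Sum.inr j) (Sum.inr k) := by
    intro j k h
    have := (hadj _ _).mp (Or.inl h)
    simp at this
  have hor : ∀ (m : Fin 2) (k : Fin 3),
      A (Sum.inl m) (Sum.inr k) ∨ A (Sum.inr k) (Sum.inl m) := by
    intro m k
    exact (hadj _ _).mpr (by simp)
  have hiff : ∀ (m : Fin 2) (k : Fin 3),
      A (Sum.inr k) (Sum.inl m) ↔ ¬ A (Sum.inl m) (Sum.inr k) :=
    fun m k => ⟨fun h h' => hasym _ _ h' h, fun h => (hor m k).resolve_left h⟩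
  have pair : ∀ i j : Fin 3, i ≠ j →
      (∃ m : Fin 2, ¬ (A (Sum.inl m) (Sum.inr i) ↔ A (Sum.inl m) (Sum.inr j))) ∧
      (∃ m : Fin 2, (A (Sum.inl m) (Sum.inr i) ↔ A (Sum.inl m) (Sum.inr j))) := by
    intro i j hij
    obtain ⟨⟨w, hd⟩, ⟨w', ha⟩⟩ := key A hpc (Sum.inr i) (Sum.inr j)
      (by simp [hij]) (hbb _ _) (hbb _ _) (hbb _ _) (hbb _ _)
    constructor
    · rcases w with m | k
      · refine ⟨m, ?_⟩
        simp only [hiff] at hd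
        tauto
      · rcases hd with ⟨h, _⟩ | ⟨h, _⟩ <;> exact absurd h (hbb _ _)
    · rcases w' with m | k
      · refine ⟨m, ?_⟩
        simp only [hiff] at ha
        tauto
      · rcases ha with ⟨h, _⟩ | ⟨h, _⟩ <;> exact absurd h (hbb _ _)
  obtain ⟨hd01, ha01⟩ := pair 0 1 (by decide)
  obtain ⟨hd02, ha02⟩ := pair 0 2 (by decide)
  obtain ⟨hd12, ha12⟩ := pair 1 2 (by decide)
  simp only [Fin.exists_fin_two] at hd01 ha01 hd02 ha02 hd12 ha12
  tauto
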